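/- In the quasi-shuffle Hopf algebra of words over a commutative monoid B (with deconcatenation coproduct and counit ε(α)=δ_{α,∅}), the linear map S defined by S(α) = (−1)^{ℓ(α)} Σ_{J ⊨ ℓ(α)} J∘(α^r) is an antipode, i.e., Σ S(α_{(1)})·α_{(2)} = ε(α)·1 for all words α; here α^r is the reversal of α, J∘β for a composition J=(j₁,…,j_l) of ℓ(β) sums consecutive blocks of β of sizes j₁,…,j_l, and the sum is over all compositions J of ℓ(α). -/

import Mathlib

/-- The quasi-shuffle product of two words over a commutative monoid `B`,
valued in the free `k`-module on words:
`∅*α = α*∅ = α` and `(a,α)*(b,β) = (a, α*(b,β)) + (b, (a,α)*β) + (a+b, α*β)`. -/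
noncomputable def qs (k : Type*) [CommRing k] {B : Type*} [AddCommMonoid B] :
    List B → List B → (List B →₀ k)
  | [], β => Finsupp.single β 1
  | α, [] => Finsupp.single α 1
  | a :: α, b :: β =>
      Finsupp.mapDomain (List.cons a) (qs k α (b :: β)) +
      Finsupp.mapDomain (List.cons b) (qs k (a :: α) β) +
      Finsupp.mapDomain (List.cons (a + b)) (qs k α β)
  termination_by α β => α.length + β.length

/-- The bilinear extension of the quasi-shuffle product to the free module. -/
noncomputable def qsMul {k : Type*} [CommRing k] {B : Type*} [AddCommMonoid B]
    (f g : List B →₀ k) : List B →₀ k :=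
  f.sum fun α c => g.sum fun β d => (c * d) • qs k α β

/-- The antipode formula: `S(α) = (−1)^{ℓ(α)} ∑_{J ⊨ ℓ(α)} J∘(α^r)`, where the
sum ranges over all compositions `J` of the length of `α`, `α^r` is the
reversal of `α`, and `J∘β` sums consecutive blocks of `β` of sizes given
by the parts of `J`. -/
noncomputable def qsAntipode (k : Type*) [CommRing k] {B : Type*} [AddCommMonoid B]
    (α : List B) : List B →₀ k :=
  (-1 : k) ^ α.length •
    ∑ J : Composition α.length,
      Finsupp.single ((α.reverse.splitWrtComposition J).map List.sum) 1

/-! ### Auxiliary material for the antipode identity -/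

section CompositionAux

lemma qsx_blocks_ne_nil {m : ℕ} (hm : 0 < m) (J : Composition m) : J.blocks ≠ [] := by
  intro h
  have hs := J.blocks_sum
  rw [h] at hs
  simp at hs
  omega

lemma qsx_blocks_cons {m : ℕ} (hm : 0 < m) (J : Composition m) :
    ∃ j t, J.blocks = j :: t := by
  cases hb : J.blocks with
  | nil => exact absurd hb (qsx_blocks_ne_nil hm J)
  | cons j t => exact ⟨j, t, rfl⟩

lemma qsx_cons_headI_tail {l : List ℕ} (h : l ≠ []) : l.headI :: l.tail = l := by
  cases l with
  | nil => exact absurd rfl h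
  | cons a t => rfl

lemma qsx_headI_pos {m : ℕ} (hm : 0 < m) (J : Composition m) : 0 < J.blocks.headI := by
  obtain ⟨j, t, hb⟩ := qsx_blocks_cons hm J
  have := J.blocks_pos (hb ▸ (List.mem_cons_self (a := j) (l := t)))
  simpa [hb] using this

/-- Prepend a block of size `1` to a composition. -/
def qsxConsOne {m : ℕ} (J : Composition m) : Composition (m + 1) where
  blocks := 1 :: J.blocks
  blocks_pos := by
    intro i hi
    rcases List.mem_cons.1 hi with rfl | hi
    · norm_num
    · exact J.blocks_pos hi
  blocks_sum := by simp [J.blocks_sum, Nat.add_comm]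

/-- Increment the first block of a composition. -/
def qsxIncHead {m : ℕ} (J : Composition m) : Composition (m + 1) where
  blocks := (J.blocks.headI + 1) :: J.blocks.tail
  blocks_pos := by
    intro i hi
    rcases List.mem_cons.1 hi with rfl | hi
    · omega
    · exact J.blocks_pos (List.mem_of_mem_tail hi)
  blocks_sum := by
    rw [List.sum_cons]
    have h := List.headI_add_tail_sum J.blocks
    rw [J.blocks_sum] at h
    omega

@[simp] lemma qsxConsOne_blocks {m : ℕ} (J : Composition m) :
    (qsxConsOne J).blocks = 1 :: J.blocks := rfl

@[simp] lemma qsxIncHead_blocks {m : ℕ} (J : Composition m) :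
    (qsxIncHead J).blocks = (J.blocks.headI + 1) :: J.blocks.tail := rfl

/-- For `m > 0`, compositions of `m+1` split into those with first block `1`
and those with first block `≥ 2`. -/
def qsxCompSuccEquiv (m : ℕ) (hm : 0 < m) :
    Composition m ⊕ Composition m ≃ Composition (m + 1) where
  toFun := Sum.elim qsxConsOne qsxIncHead
  invFun J :=
    if h : J.blocks.headI = 1 then
      Sum.inl ⟨J.blocks.tail,
        fun hi => J.blocks_pos (List.mem_of_mem_tail hi),
        by
          have h2 := List.headI_add_tail_sum J.blocks
          rw [J.blocks_sum, h] at h2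
          omega⟩
    else
      Sum.inr ⟨(J.blocks.headI - 1) :: J.blocks.tail,
        by
          intro i hi
          rcases List.mem_cons.1 hi with rfl | hi
          · have := qsx_headI_pos (Nat.succ_pos m) J
            omega
          · exact J.blocks_pos (List.mem_of_mem_tail hi),
        by
          rw [List.sum_cons]
          have h1 := List.headI_add_tail_sum J.blocks
          rw [J.blocks_sum] at h1
          have h2 := qsx_headI_pos (Nat.succ_pos m) J
          omega⟩
  left_inv := by
    rintro (J | J) <;> dsimp only [Sum.elim_inl, Sum.elim_inr]
    · rw [dif_pos (show (qsxConsOne J).blocks.headI = 1 from rfl)]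
      exact congrArg Sum.inl (Composition.ext rfl)
    · have hh := qsx_headI_pos hm J
      rw [dif_neg (show ¬ (qsxIncHead J).blocks.headI = 1 by
        simp only [qsxIncHead_blocks, List.headI_cons]
        omega)]
      refine congrArg Sum.inr (Composition.ext ?_)
      simp only [qsxIncHead_blocks, List.headI_cons, List.tail_cons]
      rw [Nat.add_sub_cancel]
      exact qsx_cons_headI_tail (qsx_blocks_ne_nil hm J)
  right_inv := by
    intro J
    dsimp only [Sum.elim_inl, Sum.elim_inr]
    by_cases h : J.blocks.headI = 1
    · rw [dif_pos h]
      simp only [Sum.elim_inl]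
      refine Composition.ext ?_
      simp only [qsxConsOne_blocks]
      have h2 := qsx_cons_headI_tail (qsx_blocks_ne_nil (Nat.succ_pos m) J)
      rw [h] at h2
      exact h2
    · rw [dif_neg h]
      dsimp only [Sum.elim_inr]
      refine Composition.ext ?_
      simp only [qsxIncHead_blocks, List.headI_cons, List.tail_cons]
      have h2 := qsx_headI_pos (Nat.succ_pos m) J
      rw [show J.blocks.headI - 1 + 1 = J.blocks.headI by omega]
      exact qsx_cons_headI_tail (qsx_blocks_ne_nil (Nat.succ_pos m) J)

lemma qsx_sum_comp_succ {M : Type*} [AddCommMonoid M] {m : ℕ} (hm : 0 < m)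
    (f : Composition (m + 1) → M) :
    ∑ J : Composition (m + 1), f J
      = (∑ J : Composition m, f (qsxConsOne J)) + ∑ J : Composition m, f (qsxIncHead J) := by
  rw [← (qsxCompSuccEquiv m hm).sum_comp f, Fintype.sum_sum_type]
  rfl

/-- The unique composition of `0`. -/
def qsxCompNil : Composition 0 :=
  ⟨[], fun h => absurd h List.not_mem_nil, rfl⟩

lemma qsx_comp_zero_eq (J : Composition 0) : J = qsxCompNil := by
  refine Composition.ext ?_
  cases hb : J.blocks with
  | nil => rfl
  | cons j t =>
    exfalso
    have h1 := J.blocks_pos (hb ▸ (List.mem_cons_self (a := j) (l := t)))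
    have h2 := J.blocks_sum
    rw [hb, List.sum_cons] at h2
    omega

lemma qsx_sum_comp_zero {M : Type*} [AddCommMonoid M] (f : Composition 0 → M) :
    ∑ J : Composition 0, f J = f qsxCompNil := by
  rw [Finset.sum_congr rfl
    (show ∀ J ∈ Finset.univ, f J = f qsxCompNil from
      fun J _ => by rw [qsx_comp_zero_eq J])]
  rw [Finset.sum_const, Finset.card_univ, composition_card]
  norm_num

/-- The unique composition of `1`. -/
def qsxCompOne : Composition 1 :=
  ⟨[1], fun hi => by have := List.eq_of_mem_singleton hi; omega, rfl⟩

lemma qsx_comp_one_eq (J : Composition 1) : J = qsxCompOne := by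
  refine Composition.ext ?_
  obtain ⟨j, t, hb⟩ := qsx_blocks_cons one_pos J
  have hj := J.blocks_pos (hb ▸ (List.mem_cons_self (a := j) (l := t)))
  have h2 := J.blocks_sum
  rw [hb, List.sum_cons] at h2
  rw [hb]
  cases t with
  | nil =>
    simp only [List.sum_nil] at h2
    have hj1 : j = 1 := by omega
    subst hj1
    rfl
  | cons x s =>
    exfalso
    have hx := J.blocks_pos (hb ▸ List.mem_cons_of_mem _ ((List.mem_cons_self (a := x) (l := s))))
    rw [List.sum_cons] at h2
    omega

lemma qsx_sum_comp_one {M : Type*} [AddCommMonoid M] (f : Composition 1 → M) :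
    ∑ J : Composition 1, f J = f qsxCompOne := by
  rw [Finset.sum_congr rfl
    (show ∀ J ∈ Finset.univ, f J = f qsxCompOne from
      fun J _ => by rw [qsx_comp_one_eq J])]
  rw [Finset.sum_const, Finset.card_univ, composition_card]
  norm_num

end CompositionAux

section QSAux

variable (k : Type*) [CommRing k] {B : Type*} [AddCommMonoid B]

lemma qs_nil_left (β : List B) : qs k [] β = Finsupp.single β 1 := by
  cases β <;> rw [qs]

lemma qs_nil_right (α : List B) : qs k α [] = Finsupp.single α 1 := by
  cases α with
  | nil => rw [qs]
  | cons a as => rw [qs]; simp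

lemma qs_cons_cons (a b : B) (α β : List B) :
    qs k (a :: α) (b :: β) =
      Finsupp.mapDomain (List.cons a) (qs k α (b :: β)) +
      Finsupp.mapDomain (List.cons b) (qs k (a :: α) β) +
      Finsupp.mapDomain (List.cons (a + b)) (qs k α β) := by
  rw [qs]

/-- First term of the quasi-shuffle recursion, as a function of the left word. -/
noncomputable def qsXterm : List B → List B → (List B →₀ k)
  | [], _ => 0
  | c :: γ, δ => Finsupp.mapDomain (List.cons c) (qs k γ δ)

/-- Third term of the quasi-shuffle recursion, as a function of the left word. -/
noncomputable def qsZterm (b : B) : List B → List B → (List B →₀ k)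
  | [], _ => 0
  | c :: γ, δ => Finsupp.mapDomain (List.cons (b + c)) (qs k γ δ)

@[simp] lemma qsXterm_cons (c : B) (γ δ : List B) :
    qsXterm k (c :: γ) δ = Finsupp.mapDomain (List.cons c) (qs k γ δ) := rfl

@[simp] lemma qsZterm_cons (b c : B) (γ δ : List B) :
    qsZterm k b (c :: γ) δ = Finsupp.mapDomain (List.cons (b + c)) (qs k γ δ) := rfl

/-- Sum over compositions of `m` of the quasi-shuffle of the block-sums of `γ` with `rest`. -/
noncomputable def qsP (m : ℕ) (γ rest : List B) : List B →₀ k :=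
  ∑ J : Composition m, qs k ((γ.splitWrtCompositionAux J.blocks).map List.sum) rest

noncomputable def qsX (m : ℕ) (γ rest : List B) : List B →₀ k :=
  ∑ J : Composition m, qsXterm k ((γ.splitWrtCompositionAux J.blocks).map List.sum) rest

noncomputable def qsZ (b : B) (m : ℕ) (γ rest : List B) : List B →₀ k :=
  ∑ J : Composition m, qsZterm k b ((γ.splitWrtCompositionAux J.blocks).map List.sum) rest

lemma qsP_zero (γ rest : List B) : qsP k 0 γ rest = Finsupp.single rest 1 := by
  unfold qsP
  rw [qsx_sum_comp_zero]
  show qs k ((γ.splitWrtCompositionAux []).map List.sum) rest = _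
  rw [show γ.splitWrtCompositionAux [] = [] from rfl, List.map_nil, qs_nil_left]

lemma qsX_one (b : B) (γ rest : List B) :
    qsX k 1 (b :: γ) rest = Finsupp.single (b :: rest) 1 := by
  unfold qsX
  rw [qsx_sum_comp_one]
  show qsXterm k (((b :: γ).splitWrtCompositionAux [1]).map List.sum) rest = _
  rw [List.splitWrtCompositionAux_cons]
  simp only [List.take_succ_cons, List.take_zero, List.drop_succ_cons, List.drop_zero,
    List.map_cons, List.sum_cons, List.sum_nil, add_zero,
    show γ.splitWrtCompositionAux [] = [] from rfl, List.map_nil, qsXterm_cons,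
    qs_nil_left, Finsupp.mapDomain_single]

lemma qsP_split {m : ℕ} (hm : 0 < m) (γ : List B) (b : B) (rest : List B) :
    qsP k m γ (b :: rest)
      = qsX k m γ (b :: rest) + (Finsupp.mapDomain (List.cons b) (qsP k m γ rest)
          + qsZ k b m γ rest) := by
  unfold qsP qsX qsZ
  rw [Finsupp.mapDomain_finset_sum, ← Finset.sum_add_distrib, ← Finset.sum_add_distrib]
  refine Finset.sum_congr rfl fun J _ => ?_
  obtain ⟨j, t, hb⟩ := qsx_blocks_cons hm J
  rw [hb, List.splitWrtCompositionAux_cons, List.map_cons]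
  rw [qs_cons_cons, add_comm ((List.take j γ).sum) b, add_assoc]
  rfl

lemma qsX_last {m : ℕ} (hm : 0 < m) (γ : List B) : qsX k m γ [] = qsP k m γ [] := by
  unfold qsX qsP
  refine Finset.sum_congr rfl fun J _ => ?_
  obtain ⟨j, t, hb⟩ := qsx_blocks_cons hm J
  simp only [hb, List.splitWrtCompositionAux_cons, List.map_cons, qsXterm_cons,
    qs_nil_right, Finsupp.mapDomain_single]

lemma qsX_succ {m : ℕ} (hm : 0 < m) (b : B) (γ rest : List B) :
    qsX k (m + 1) (b :: γ) rest
      = Finsupp.mapDomain (List.cons b) (qsP k m γ rest) + qsZ k b m γ rest := by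
  unfold qsX qsP qsZ
  rw [qsx_sum_comp_succ hm, Finsupp.mapDomain_finset_sum]
  congr 1
  · refine Finset.sum_congr rfl fun J _ => ?_
    rw [qsxConsOne_blocks, List.splitWrtCompositionAux_cons]
    simp only [List.take_succ_cons, List.take_zero, List.drop_succ_cons, List.drop_zero,
      List.map_cons, List.sum_cons, List.sum_nil, add_zero, qsXterm_cons]
  · refine Finset.sum_congr rfl fun J _ => ?_
    obtain ⟨j, t, hb⟩ := qsx_blocks_cons hm J
    have hblocks : (qsxIncHead J).blocks = (j + 1) :: t := by
      rw [qsxIncHead_blocks, hb]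
      rfl
    rw [hblocks, List.splitWrtCompositionAux_cons, hb, List.splitWrtCompositionAux_cons]
    simp only [List.take_succ_cons, List.drop_succ_cons, List.map_cons, List.sum_cons,
      qsXterm_cons, qsZterm_cons]

lemma qsMul_single_right (F : List B →₀ k) (β : List B) :
    qsMul F (Finsupp.single β (1 : k)) = F.sum fun w c => c • qs k w β := by
  unfold qsMul
  refine Finsupp.sum_congr fun w _ => ?_
  rw [Finsupp.sum_single_index (by rw [mul_zero, zero_smul]), mul_one]

lemma qsAntipode_mul_single (w β : List B) :
    qsMul (qsAntipode k w) (Finsupp.single β (1 : k))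
      = (-1 : k) ^ w.length • qsP k w.length w.reverse β := by
  rw [qsMul_single_right]
  unfold qsAntipode
  rw [Finsupp.sum_smul_index' (fun w' => by rw [zero_smul])]
  rw [← Finsupp.sum_finset_sum_index (fun w' => by rw [smul_zero, zero_smul])
      (fun w' c₁ c₂ => by rw [smul_add, add_smul])]
  unfold qsP
  rw [Finset.smul_sum]
  refine Finset.sum_congr rfl fun J _ => ?_
  rw [Finsupp.sum_single_index (by rw [smul_zero, zero_smul]), smul_eq_mul, mul_one]
  rfl

end QSAux

open scoped Classical in
/-- `S` is an antipode for the quasi-shuffle bialgebra of words: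
`∑ S(α₍₁₎)·α₍₂₎ = ε(α)·1` for every word `α`, where the coproduct is
deconcatenation and `ε(α) = δ_{α,∅}`. -/
theorem stmt_10 (k : Type*) [CommRing k] {B : Type*} [AddCommMonoid B]
    (α : List B) :
    ∑ i ∈ Finset.range (α.length + 1),
      qsMul (qsAntipode k (α.take i)) (Finsupp.single (α.drop i) 1)
    = if α = [] then Finsupp.single ([] : List B) (1 : k) else 0 := by
  cases α with
  | nil =>
    rw [if_pos rfl]
    simp only [List.length_nil, zero_add, Finset.range_one, Finset.sum_singleton]
    rw [qsAntipode_mul_single]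
    simp only [List.take_nil, List.drop_nil, List.length_nil, List.reverse_nil,
      pow_zero, one_smul]
    exact qsP_zero k [] []
  | cons a β =>
    rw [if_neg (by simp)]
    obtain ⟨n, hn⟩ : ∃ n, (a :: β).length = n + 1 := ⟨β.length, rfl⟩
    have hstep : ∀ i ∈ Finset.range ((a :: β).length + 1),
        qsMul (qsAntipode k ((a :: β).take i)) (Finsupp.single ((a :: β).drop i) (1 : k))
          = (-1 : k) ^ i • qsP k i ((a :: β).take i).reverse ((a :: β).drop i) := by
      intro i hi
      have h1 : i ≤ (a :: β).length := by
        have := Finset.mem_range.1 hi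
        omega
      rw [qsAntipode_mul_single, List.length_take, min_eq_left h1]
    rw [Finset.sum_congr rfl hstep, hn]
    set F : ℕ → (List B →₀ k) := fun j =>
      (-1 : k) ^ j • qsX k (j + 1) ((a :: β).take (j + 1)).reverse ((a :: β).drop (j + 1))
      with hF
    rw [Finset.sum_range_succ, Finset.sum_range_succ']
    have h0 : (-1 : k) ^ 0 • qsP k 0 ((a :: β).take 0).reverse ((a :: β).drop 0) = F 0 := by
      simp only [hF, pow_zero, one_smul, List.take_zero, List.reverse_nil, List.drop_zero]
      rw [qsP_zero, show (a :: β).take (0 + 1) = [a] from rfl,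
        show (a :: β).drop (0 + 1) = β from rfl,
        show ([a] : List B).reverse = [a] from rfl, qsX_one]
    have hmid : ∀ i ∈ Finset.range n,
        (-1 : k) ^ (i + 1) • qsP k (i + 1) ((a :: β).take (i + 1)).reverse
            ((a :: β).drop (i + 1))
          = F (i + 1) - F i := by
      intro i hi
      have hi' : i + 1 < (a :: β).length := by
        have := Finset.mem_range.1 hi
        omega
      rw [List.drop_eq_getElem_cons hi']
      rw [qsP_split k (show 0 < i + 1 by omega)]
      rw [← qsX_succ k (show 0 < i + 1 by omega)]
      have hrev : (a :: β)[i + 1] :: ((a :: β).take (i + 1)).reverse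
          = ((a :: β).take (i + 1 + 1)).reverse := by
        have hib : i < β.length := by
          have h3 := hi'
          simp only [List.length_cons] at h3
          omega
        conv_rhs => rw [List.take_succ]
        rw [List.getElem?_eq_getElem hi']
        simp [List.take_succ, List.getElem?_eq_getElem hib]
      rw [hrev, ← List.drop_eq_getElem_cons hi']
      simp only [hF]
      rw [smul_add, pow_succ, mul_neg_one, neg_smul]
      abel
    have hlast : (-1 : k) ^ (n + 1) • qsP k (n + 1) ((a :: β).take (n + 1)).reverse
          ((a :: β).drop (n + 1))
        = -F n := by
      simp only [hF]
      have hd : (a :: β).drop (n + 1) = [] := by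
        rw [← hn]
        exact List.drop_length
      rw [hd, ← qsX_last k (show 0 < n + 1 by omega)]
      rw [pow_succ, mul_neg_one, neg_smul]
    rw [Finset.sum_congr rfl hmid, Finset.sum_range_sub F, h0, hlast]
    abel
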